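/- For every x ∈ (0, π/2), 2 + (2/45)x⁴ + (2/π)⁶·(-2 + π²/4 - π⁴/360)·x⁶ > (x/sin x)² + x/tan x > 2 + (2/45)x⁴ + (8/945)x⁶. -/

import Mathlib

open Real

lemma nonneg_of_deriv (F F' : ℝ → ℝ) (hd : ∀ y, HasDerivAt F (F' y) y) (h0 : F 0 = 0)
    (hF' : ∀ y, 0 ≤ y → 0 ≤ F' y) {x : ℝ} (hx : 0 ≤ x) : 0 ≤ F x := by
  have hmono : MonotoneOn F (Set.Ici 0) := by
    apply monotoneOn_of_deriv_nonneg (convex_Ici 0)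
    · exact fun y _ => (hd y).continuousAt.continuousWithinAt
    · intro y hy
      exact (hd y).differentiableAt.differentiableWithinAt
    · intro y hy
      rw [(hd y).deriv]
      rw [interior_Ici] at hy
      exact hF' y hy.le
  have := hmono (Set.self_mem_Ici) (by exact hx) hx
  linarith [h0 ▸ this]

lemma sin_lb3 {x : ℝ} (hx : 0 ≤ x) : (x - x^3/6) ≤ Real.sin x := by
  have key := nonneg_of_deriv (fun y : ℝ => Real.sin y - (y - y^3/6)) (fun y : ℝ => Real.cos y - (1 - y^2/2))
    (fun y => by
      have h1 := (Real.hasDerivAt_sin y).sub ((hasDerivAt_id' y).sub ((hasDerivAt_pow 3 y).div_const 6))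
      refine h1.congr_deriv ?_
      push_cast
      ring)
    (by norm_num)
    (fun y hy => by have h := Real.one_sub_sq_div_two_le_cos (x := y); linarith)
    hx
  linarith

lemma cos_ub4 {x : ℝ} (hx : 0 ≤ x) : Real.cos x ≤ (1 - x^2/2 + x^4/24) := by
  have key := nonneg_of_deriv (fun y : ℝ => (1 - y^2/2 + y^4/24) - Real.cos y) (fun y : ℝ => Real.sin y - (y - y^3/6))
    (fun y => by
      have h1 := (((hasDerivAt_const y (1:ℝ)).sub ((hasDerivAt_pow 2 y).div_const 2)).add ((hasDerivAt_pow 4 y).div_const 24)).sub (Real.hasDerivAt_cos y)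
      refine h1.congr_deriv ?_
      push_cast
      ring)
    (by norm_num)
    (fun y hy => by have h := sin_lb3 hy; linarith)
    hx
  linarith

lemma sin_ub5 {x : ℝ} (hx : 0 ≤ x) : Real.sin x ≤ (x - x^3/6 + x^5/120) := by
  have key := nonneg_of_deriv (fun y : ℝ => (y - y^3/6 + y^5/120) - Real.sin y) (fun y : ℝ => (1 - y^2/2 + y^4/24) - Real.cos y)
    (fun y => by
      have h1 := (((hasDerivAt_id' y).sub ((hasDerivAt_pow 3 y).div_const 6)).add ((hasDerivAt_pow 5 y).div_const 120)).sub (Real.hasDerivAt_sin y)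
      refine h1.congr_deriv ?_
      push_cast
      ring)
    (by norm_num)
    (fun y hy => by have h := cos_ub4 hy; linarith)
    hx
  linarith

lemma cos_lb6 {x : ℝ} (hx : 0 ≤ x) : (1 - x^2/2 + x^4/24 - x^6/720) ≤ Real.cos x := by
  have key := nonneg_of_deriv (fun y : ℝ => Real.cos y - (1 - y^2/2 + y^4/24 - y^6/720)) (fun y : ℝ => (y - y^3/6 + y^5/120) - Real.sin y)
    (fun y => by
      have h1 := (Real.hasDerivAt_cos y).sub ((((hasDerivAt_const y (1:ℝ)).sub ((hasDerivAt_pow 2 y).div_const 2)).add ((hasDerivAt_pow 4 y).div_const 24)).sub ((hasDerivAt_pow 6 y).div_const 720))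
      refine h1.congr_deriv ?_
      push_cast
      ring)
    (by norm_num)
    (fun y hy => by have h := sin_ub5 hy; linarith)
    hx
  linarith

lemma sin_lb7 {x : ℝ} (hx : 0 ≤ x) : (x - x^3/6 + x^5/120 - x^7/5040) ≤ Real.sin x := by
  have key := nonneg_of_deriv (fun y : ℝ => Real.sin y - (y - y^3/6 + y^5/120 - y^7/5040)) (fun y : ℝ => Real.cos y - (1 - y^2/2 + y^4/24 - y^6/720))
    (fun y => by
      have h1 := (Real.hasDerivAt_sin y).sub ((((hasDerivAt_id' y).sub ((hasDerivAt_pow 3 y).div_const 6)).add ((hasDerivAt_pow 5 y).div_const 120)).sub ((hasDerivAt_pow 7 y).div_const 5040))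
      refine h1.congr_deriv ?_
      push_cast
      ring)
    (by norm_num)
    (fun y hy => by have h := cos_lb6 hy; linarith)
    hx
  linarith

lemma cos_ub8 {x : ℝ} (hx : 0 ≤ x) : Real.cos x ≤ (1 - x^2/2 + x^4/24 - x^6/720 + x^8/40320) := by
  have key := nonneg_of_deriv (fun y : ℝ => (1 - y^2/2 + y^4/24 - y^6/720 + y^8/40320) - Real.cos y) (fun y : ℝ => Real.sin y - (y - y^3/6 + y^5/120 - y^7/5040))
    (fun y => by
      have h1 := (((((hasDerivAt_const y (1:ℝ)).sub ((hasDerivAt_pow 2 y).div_const 2)).add ((hasDerivAt_pow 4 y).div_const 24)).sub ((hasDerivAt_pow 6 y).div_const 720)).add ((hasDerivAt_pow 8 y).div_const 40320)).sub (Real.hasDerivAt_cos y)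
      refine h1.congr_deriv ?_
      push_cast
      ring)
    (by norm_num)
    (fun y hy => by have h := sin_lb7 hy; linarith)
    hx
  linarith

lemma sin_ub9 {x : ℝ} (hx : 0 ≤ x) : Real.sin x ≤ (x - x^3/6 + x^5/120 - x^7/5040 + x^9/362880) := by
  have key := nonneg_of_deriv (fun y : ℝ => (y - y^3/6 + y^5/120 - y^7/5040 + y^9/362880) - Real.sin y) (fun y : ℝ => (1 - y^2/2 + y^4/24 - y^6/720 + y^8/40320) - Real.cos y)
    (fun y => by
      have h1 := (((((hasDerivAt_id' y).sub ((hasDerivAt_pow 3 y).div_const 6)).add ((hasDerivAt_pow 5 y).div_const 120)).sub ((hasDerivAt_pow 7 y).div_const 5040)).add ((hasDerivAt_pow 9 y).div_const 362880)).sub (Real.hasDerivAt_sin y)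
      refine h1.congr_deriv ?_
      push_cast
      ring)
    (by norm_num)
    (fun y hy => by have h := cos_ub8 hy; linarith)
    hx
  linarith

lemma cos_lb10 {x : ℝ} (hx : 0 ≤ x) : (1 - x^2/2 + x^4/24 - x^6/720 + x^8/40320 - x^10/3628800) ≤ Real.cos x := by
  have key := nonneg_of_deriv (fun y : ℝ => Real.cos y - (1 - y^2/2 + y^4/24 - y^6/720 + y^8/40320 - y^10/3628800)) (fun y : ℝ => (y - y^3/6 + y^5/120 - y^7/5040 + y^9/362880) - Real.sin y)
    (fun y => by
      have h1 := (Real.hasDerivAt_cos y).sub ((((((hasDerivAt_const y (1:ℝ)).sub ((hasDerivAt_pow 2 y).div_const 2)).add ((hasDerivAt_pow 4 y).div_const 24)).sub ((hasDerivAt_pow 6 y).div_const 720)).add ((hasDerivAt_pow 8 y).div_const 40320)).sub ((hasDerivAt_pow 10 y).div_const 3628800))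
      refine h1.congr_deriv ?_
      push_cast
      ring)
    (by norm_num)
    (fun y hy => by have h := sin_ub9 hy; linarith)
    hx
  linarith

lemma sin_lb11 {x : ℝ} (hx : 0 ≤ x) : (x - x^3/6 + x^5/120 - x^7/5040 + x^9/362880 - x^11/39916800) ≤ Real.sin x := by
  have key := nonneg_of_deriv (fun y : ℝ => Real.sin y - (y - y^3/6 + y^5/120 - y^7/5040 + y^9/362880 - y^11/39916800)) (fun y : ℝ => Real.cos y - (1 - y^2/2 + y^4/24 - y^6/720 + y^8/40320 - y^10/3628800))
    (fun y => by
      have h1 := (Real.hasDerivAt_sin y).sub ((((((hasDerivAt_id' y).sub ((hasDerivAt_pow 3 y).div_const 6)).add ((hasDerivAt_pow 5 y).div_const 120)).sub ((hasDerivAt_pow 7 y).div_const 5040)).add ((hasDerivAt_pow 9 y).div_const 362880)).sub ((hasDerivAt_pow 11 y).div_const 39916800))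
      refine h1.congr_deriv ?_
      push_cast
      ring)
    (by norm_num)
    (fun y hy => by have h := cos_lb10 hy; linarith)
    hx
  linarith

lemma cos_ub12 {x : ℝ} (hx : 0 ≤ x) : Real.cos x ≤ (1 - x^2/2 + x^4/24 - x^6/720 + x^8/40320 - x^10/3628800 + x^12/479001600) := by
  have key := nonneg_of_deriv (fun y : ℝ => (1 - y^2/2 + y^4/24 - y^6/720 + y^8/40320 - y^10/3628800 + y^12/479001600) - Real.cos y) (fun y : ℝ => Real.sin y - (y - y^3/6 + y^5/120 - y^7/5040 + y^9/362880 - y^11/39916800))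
    (fun y => by
      have h1 := (((((((hasDerivAt_const y (1:ℝ)).sub ((hasDerivAt_pow 2 y).div_const 2)).add ((hasDerivAt_pow 4 y).div_const 24)).sub ((hasDerivAt_pow 6 y).div_const 720)).add ((hasDerivAt_pow 8 y).div_const 40320)).sub ((hasDerivAt_pow 10 y).div_const 3628800)).add ((hasDerivAt_pow 12 y).div_const 479001600)).sub (Real.hasDerivAt_cos y)
      refine h1.congr_deriv ?_
      push_cast
      ring)
    (by norm_num)
    (fun y hy => by have h := sin_lb11 hy; linarith)
    hx
  linarith

lemma sin_ub13 {x : ℝ} (hx : 0 ≤ x) : Real.sin x ≤ (x - x^3/6 + x^5/120 - x^7/5040 + x^9/362880 - x^11/39916800 + x^13/6227020800) := by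
  have key := nonneg_of_deriv (fun y : ℝ => (y - y^3/6 + y^5/120 - y^7/5040 + y^9/362880 - y^11/39916800 + y^13/6227020800) - Real.sin y) (fun y : ℝ => (1 - y^2/2 + y^4/24 - y^6/720 + y^8/40320 - y^10/3628800 + y^12/479001600) - Real.cos y)
    (fun y => by
      have h1 := (((((((hasDerivAt_id' y).sub ((hasDerivAt_pow 3 y).div_const 6)).add ((hasDerivAt_pow 5 y).div_const 120)).sub ((hasDerivAt_pow 7 y).div_const 5040)).add ((hasDerivAt_pow 9 y).div_const 362880)).sub ((hasDerivAt_pow 11 y).div_const 39916800)).add ((hasDerivAt_pow 13 y).div_const 6227020800)).sub (Real.hasDerivAt_sin y)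
      refine h1.congr_deriv ?_
      push_cast
      ring)
    (by norm_num)
    (fun y hy => by have h := cos_ub12 hy; linarith)
    hx
  linarith

lemma lower_t {t : ℝ} (ht : 0 < t) (ht2 : t < π) :
    (4 + t^4/180 + t^6/3780) * (1 - Real.cos t) < t^2 + t * Real.sin t := by
  have hs := sin_lb11 ht.le
  have hc := cos_lb10 ht.le
  have hA : (0:ℝ) < 4 + t^4/180 + t^6/3780 := by positivity
  have hu : t^2 < 9.8696066 := by nlinarith [pi_lt_d6]
  have hu0 : 0 < t^2 := by positivity
  have key : 0 < 1/201600 - 61/239500800*t^2 + 23/4572288000*(t^2)^2 - 1/13716864000*(t^2)^3 := by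
    nlinarith [mul_pos hu0 hu0, mul_pos (mul_pos hu0 hu0) hu0, sq_nonneg (t^2),
      mul_pos hu0 (sub_pos.2 hu), mul_nonneg (mul_pos hu0 hu0).le (sub_pos.2 hu).le]
  have h1 : t * (t - t^3/6 + t^5/120 - t^7/5040 + t^9/362880 - t^11/39916800) ≤ t * Real.sin t := mul_le_mul_of_nonneg_left hs ht.le
  have h2 : (4 + t^4/180 + t^6/3780) * (1 - t^2/2 + t^4/24 - t^6/720 + t^8/40320 - t^10/3628800) ≤ (4 + t^4/180 + t^6/3780) * Real.cos t :=
    mul_le_mul_of_nonneg_left hc hA.le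
  have h3 : 0 < t^2 + t * (t - t^3/6 + t^5/120 - t^7/5040 + t^9/362880 - t^11/39916800) - (4 + t^4/180 + t^6/3780) * (1 - (1 - t^2/2 + t^4/24 - t^6/720 + t^8/40320 - t^10/3628800)) := by
    have hring : t^2 + t * (t - t^3/6 + t^5/120 - t^7/5040 + t^9/362880 - t^11/39916800) - (4 + t^4/180 + t^6/3780) * (1 - (1 - t^2/2 + t^4/24 - t^6/720 + t^8/40320 - t^10/3628800))
        = t^10 * (1/201600 - 61/239500800*t^2 + 23/4572288000*(t^2)^2 - 1/13716864000*(t^2)^3) := by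
      ring
    rw [hring]
    exact mul_pos (by positivity) key
  nlinarith [h1, h2, h3]

lemma upperA {t : ℝ} (ht : 0 < t) (ht2 : t ≤ 2.85) :
    t^2 + t * Real.sin t < (4 + t^4/180 + (409/1000000)*t^6) * (1 - Real.cos t) := by
  have hs := sin_ub13 ht.le
  have hc := cos_ub12 ht.le
  have hA : (0:ℝ) < 4 + t^4/180 + (409/1000000)*t^6 := by positivity
  have hu : t^2 ≤ 8.1225 := by nlinarith
  have hu0 : 0 < t^2 := by positivity
  have key : 0 < 27301/378000000 - 49801/4536000000*t^2 + 669061/1496880000000*(t^2)^2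
      - 4097447/467026560000000*(t^2)^3 + 108973/1077753600000000*(t^2)^4 - 409/479001600000000*(t^2)^5 := by
    nlinarith [mul_pos hu0 hu0, mul_pos (mul_pos hu0 hu0) hu0, mul_pos (mul_pos (mul_pos hu0 hu0) hu0) hu0,
      mul_nonneg (mul_pos hu0 hu0).le (sub_nonneg.2 hu), mul_nonneg (mul_nonneg (mul_pos hu0 hu0).le hu0.le) (sub_nonneg.2 hu),
      mul_nonneg (mul_nonneg (mul_nonneg (mul_pos hu0 hu0).le hu0.le) hu0.le) (sub_nonneg.2 hu),
      sq_nonneg (t^2 - 4), mul_pos hu0 (mul_pos hu0 hu0)]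
  have h1 : t * Real.sin t ≤ t * (t - t^3/6 + t^5/120 - t^7/5040 + t^9/362880 - t^11/39916800 + t^13/6227020800) := mul_le_mul_of_nonneg_left hs ht.le
  have h2 : (4 + t^4/180 + (409/1000000)*t^6) * (1 - t^2/2 + t^4/24 - t^6/720 + t^8/40320 - t^10/3628800 + t^12/479001600) ≥ (4 + t^4/180 + (409/1000000)*t^6) * Real.cos t :=
    mul_le_mul_of_nonneg_left hc hA.le
  have h3 : 0 < (4 + t^4/180 + (409/1000000)*t^6) * (1 - (1 - t^2/2 + t^4/24 - t^6/720 + t^8/40320 - t^10/3628800 + t^12/479001600)) - t^2 - t * (t - t^3/6 + t^5/120 - t^7/5040 + t^9/362880 - t^11/39916800 + t^13/6227020800) := by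
    have hring : (4 + t^4/180 + (409/1000000)*t^6) * (1 - (1 - t^2/2 + t^4/24 - t^6/720 + t^8/40320 - t^10/3628800 + t^12/479001600)) - t^2 - t * (t - t^3/6 + t^5/120 - t^7/5040 + t^9/362880 - t^11/39916800 + t^13/6227020800)
        = t^8 * (27301/378000000 - 49801/4536000000*t^2 + 669061/1496880000000*(t^2)^2
      - 4097447/467026560000000*(t^2)^3 + 108973/1077753600000000*(t^2)^4 - 409/479001600000000*(t^2)^5) := by
      ring
    rw [hring]
    exact mul_pos (by positivity) key
  nlinarith [h1, h2, h3]


lemma pi_coef_bounds : 409/1000000 ≤ (π^2/4 - 2 - π^4/360) * 2 / π^6 ∧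
    (π^2/4 - 2 - π^4/360) * 2 / π^6 ≤ 41/100000 := by
  have h1 := pi_gt_d6
  have h2 := pi_lt_d6
  have hp : (0:ℝ) < π := pi_pos
  have h2l : (9.8696002 : ℝ) < π^2 := by nlinarith
  have h2u : π^2 < 9.8696066 := by nlinarith
  have h4l : (97.408998 : ℝ) < π^4 := by nlinarith
  have h4u : π^4 < 97.409134 := by nlinarith
  have h6l : (961.38766 : ℝ) < π^6 := by
    nlinarith [mul_lt_mul_of_pos_left h2l (show (0:ℝ) < π^4 by positivity)]
  have h6u : π^6 < 961.39024 := by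
    nlinarith [mul_lt_mul_of_pos_left h2u (show (0:ℝ) < π^4 by positivity)]
  have hp6 : (0:ℝ) < π^6 := by positivity
  constructor
  · rw [le_div_iff₀ hp6]; nlinarith
  · rw [div_le_iff₀ hp6]; nlinarith

set_option maxHeartbeats 2000000 in
lemma upperB {t : ℝ} (ht : 2.85 ≤ t) (ht2 : t < π) :
    t^2 + t * Real.sin t
      < (4 + t^4/180 + ((π^2/4 - 2 - π^4/360) * 2 / π^6) * t^6) * (1 - Real.cos t) := by
  set c : ℝ := (π^2/4 - 2 - π^4/360) * 2 / π^6 with hc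
  obtain ⟨hcl, hcu⟩ := pi_coef_bounds
  set M : ℝ → ℝ := fun y => (4 + y^4/180 + c*y^6) * (1 - Real.cos y) - y^2 - y * Real.sin y with hM
  have hM' : ∀ y : ℝ, HasDerivAt M
      ((y^3/45 + c*(6*y^5)) * (1 - Real.cos y) + (4 + y^4/180 + c*y^6) * Real.sin y
        - 2*y - (Real.sin y + y * Real.cos y)) y := by
    intro y
    have hA : HasDerivAt (fun y : ℝ => 4 + y^4/180 + c*y^6) (4*y^3/180 + c*(6*y^5)) y := by
      have h := ((hasDerivAt_const y (4:ℝ)).add ((hasDerivAt_pow 4 y).div_const 180)).add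
        ((hasDerivAt_pow 6 y).const_mul c)
      refine h.congr_deriv ?_
      push_cast
      ring
    have hB : HasDerivAt (fun y : ℝ => 1 - Real.cos y) (Real.sin y) y := by
      have h := (hasDerivAt_const y (1:ℝ)).sub (Real.hasDerivAt_cos y)
      refine h.congr_deriv ?_
      ring
    have h := ((hA.mul hB).sub (hasDerivAt_pow 2 y)).sub ((hasDerivAt_id' y).mul (Real.hasDerivAt_sin y))
    refine h.congr_deriv ?_
    push_cast
    ring
  have hMpi : M π = 0 := by
    have hp6 : (π:ℝ)^6 ≠ 0 := by positivity
    simp only [hM, hc, Real.cos_pi, Real.sin_pi]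
    field_simp
    ring
  have hanti : StrictAntiOn M (Set.Icc 2.85 π) := by
    apply strictAntiOn_of_deriv_neg (convex_Icc _ _)
    · exact fun y _ => (hM' y).continuousAt.continuousWithinAt
    · intro y hy
      rw [interior_Icc] at hy
      obtain ⟨hy1, hy2⟩ := hy
      rw [(hM' y).deriv]
      have hy0 : (0:ℝ) < y := by linarith
      have hypi : y ≤ π := hy2.le
      have hsin0 : 0 ≤ Real.sin y := Real.sin_nonneg_of_nonneg_of_le_pi hy0.le hypi
      have hcos1 : Real.cos y ≤ 1 := Real.cos_le_one y
      have hs13 := sin_ub13 hy0.le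
      have hs11 := sin_lb11 hy0.le
      have hc10 := cos_lb10 hy0.le
      have hu1 : 8.1225 ≤ y^2 := by nlinarith
      have hu2 : y^2 < 9.8696066 := by nlinarith [pi_lt_d6]
      have hu0 : (0:ℝ) < y^2 := by positivity
      have key : 2749/4725000 - 4999/45360000*y^2 + 33557/6237000000*(y^2)^2
          - 2808821/23351328000000*(y^2)^3 + 7493/4490640000000*(y^2)^4
          - 13141/1401079680000000*(y^2)^5 + 41/622702080000000*(y^2)^6 < 0 := by
        nlinarith [mul_nonneg (sub_nonneg.2 hu1) (sub_pos.2 hu2).le, mul_pos hu0 hu0,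
          mul_nonneg (mul_nonneg (sub_nonneg.2 hu1) (sub_pos.2 hu2).le) hu0.le,
          mul_nonneg (mul_nonneg (mul_nonneg (sub_nonneg.2 hu1) (sub_pos.2 hu2).le) hu0.le) hu0.le,
          mul_nonneg (mul_nonneg (mul_nonneg (mul_nonneg (sub_nonneg.2 hu1) (sub_pos.2 hu2).le) hu0.le) hu0.le) hu0.le,
          mul_nonneg (mul_nonneg (sub_nonneg.2 hu1) (sub_nonneg.2 hu1)) hu0.le]
      have hF1 : (y^3/45 + c*(6*y^5)) * (1 - Real.cos y)
          ≤ (y^3/45 + (41/100000)*(6*y^5)) * (1 - (1 - y^2/2 + y^4/24 - y^6/720 + y^8/40320 - y^10/3628800)) := by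
        apply mul_le_mul
        · nlinarith [pow_pos hy0 5]
        · linarith
        · linarith
        · positivity
      have hF2 : (4 + y^4/180 + c*y^6) * Real.sin y ≤ (4 + y^4/180 + (41/100000)*y^6) * (y - y^3/6 + y^5/120 - y^7/5040 + y^9/362880 - y^11/39916800 + y^13/6227020800) := by
        apply mul_le_mul
        · nlinarith [pow_pos hy0 6]
        · exact hs13
        · exact hsin0
        · positivity
      have hF3 : -(Real.sin y) ≤ -(y - y^3/6 + y^5/120 - y^7/5040 + y^9/362880 - y^11/39916800) := by linarith
      have hF4 : -(y * Real.cos y) ≤ -(y * (1 - y^2/2 + y^4/24 - y^6/720 + y^8/40320 - y^10/3628800)) := by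
        have := mul_le_mul_of_nonneg_left hc10 hy0.le
        linarith
      have hR : (y^3/45 + (41/100000)*(6*y^5)) * (1 - (1 - y^2/2 + y^4/24 - y^6/720 + y^8/40320 - y^10/3628800))
          + (4 + y^4/180 + (41/100000)*y^6) * (y - y^3/6 + y^5/120 - y^7/5040 + y^9/362880 - y^11/39916800 + y^13/6227020800) - 2*y - (y - y^3/6 + y^5/120 - y^7/5040 + y^9/362880 - y^11/39916800) - y * (1 - y^2/2 + y^4/24 - y^6/720 + y^8/40320 - y^10/3628800)
          = y^7 * (2749/4725000 - 4999/45360000*y^2 + 33557/6237000000*(y^2)^2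
          - 2808821/23351328000000*(y^2)^3 + 7493/4490640000000*(y^2)^4
          - 13141/1401079680000000*(y^2)^5 + 41/622702080000000*(y^2)^6) := by
        ring
      have hRneg : y^7 * (2749/4725000 - 4999/45360000*y^2 + 33557/6237000000*(y^2)^2
          - 2808821/23351328000000*(y^2)^3 + 7493/4490640000000*(y^2)^4
          - 13141/1401079680000000*(y^2)^5 + 41/622702080000000*(y^2)^6) < 0 :=
        mul_neg_of_pos_of_neg (by positivity) key
      linarith [hF1, hF2, hF3, hF4, hR ▸ hRneg]
  have hmem1 : t ∈ Set.Icc (2.85:ℝ) π := ⟨ht, ht2.le⟩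
  have hmem2 : π ∈ Set.Icc (2.85:ℝ) π := ⟨by linarith [pi_gt_d6], le_refl _⟩
  have := hanti hmem1 hmem2 ht2
  rw [hMpi] at this
  simp only [hM] at this
  linarith


theorem x_div_sinx_sq_add_x_div_tanx_deg6_bounds :
    ∀ x ∈ Set.Ioo (0 : ℝ) (π / 2),
      2 + (2 / 45) * x ^ 4 + (2 / π) ^ 6 * (-2 + π ^ 2 / 4 - π ^ 4 / 360) * x ^ 6
          > (x / Real.sin x) ^ 2 + x * Real.cos x / Real.sin x ∧
      (x / Real.sin x) ^ 2 + x * Real.cos x / Real.sin x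
          > 2 + (2 / 45) * x ^ 4 + (8 / 945) * x ^ 6 := by
  rintro x ⟨hx0, hx2⟩
  have hxpi : x < π := by linarith [pi_pos]
  have hs : 0 < Real.sin x := Real.sin_pos_of_pos_of_lt_pi hx0 hxpi
  have hs2 : 0 < Real.sin x ^ 2 := by positivity
  have e1 : Real.cos (2*x) = 1 - 2 * Real.sin x ^ 2 := by
    have := Real.sin_sq_add_cos_sq x
    rw [Real.cos_two_mul]
    linarith
  have e2 : Real.sin (2*x) = 2 * Real.sin x * Real.cos x := Real.sin_two_mul x
  have hrw : (x / Real.sin x) ^ 2 + x * Real.cos x / Real.sin x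
      = (x^2 + x * Real.cos x * Real.sin x) / Real.sin x ^ 2 := by
    field_simp
  have ht0 : 0 < 2*x := by linarith
  have htpi : 2*x < π := by linarith
  have hKrel : (2 / π) ^ 6 * (-2 + π ^ 2 / 4 - π ^ 4 / 360) = 32 * ((π^2/4 - 2 - π^4/360) * 2 / π^6) := by
    have hp : (π:ℝ) ≠ 0 := pi_ne_zero
    field_simp
    ring
  constructor
  · -- upper bound
    have hupper : (2*x)^2 + (2*x) * Real.sin (2*x)
        < (4 + (2*x)^4/180 + ((π^2/4 - 2 - π^4/360) * 2 / π^6) * (2*x)^6) * (1 - Real.cos (2*x)) := by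
      rcases le_or_gt (2*x) 2.85 with h | h
      · have hA := upperA ht0 h
        have hc := pi_coef_bounds.1
        have hcos : 0 ≤ 1 - Real.cos (2*x) := by linarith [Real.cos_le_one (2*x)]
        nlinarith [mul_le_mul_of_nonneg_right
          (show (409/1000000 : ℝ)*(2*x)^6 ≤ ((π^2/4 - 2 - π^4/360) * 2 / π^6)*(2*x)^6 from by
            nlinarith [pow_pos ht0 6]) hcos]
      · exact upperB h.le htpi
    rw [e1, e2] at hupper
    rw [gt_iff_lt, hrw, div_lt_iff₀ hs2, hKrel]
    nlinarith [hupper]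
  · -- lower bound
    have hlower : (4 + (2*x)^4/180 + (2*x)^6/3780) * (1 - Real.cos (2*x))
        < (2*x)^2 + (2*x) * Real.sin (2*x) := lower_t ht0 htpi
    rw [e1, e2] at hlower
    rw [gt_iff_lt, hrw, lt_div_iff₀ hs2]
    nlinarith [hlower]
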